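/- Legendre's theorem on best approximation: let x be an irrational real number, p an integer and q a positive integer with gcd(p,q) = 1. If |x − p/q| < 1/(2q²), then p/q is a convergent of the regular continued fraction expansion of x, i.e. p/q = pₙ/qₙ for some n. -/

import Mathlib

/-- The Gauss map `T : [0,1) → [0,1)`, `T 0 = 0` and `T x = 1/x - ⌊1/x⌋` for `x ≠ 0`. -/
noncomputable def gaussMap : ℝ → ℝ := fun x => if x = 0 then 0 else Int.fract (1 / x)

/-- The partial quotients of the regular continued fraction expansion
`x = [a₀; a₁, a₂, …]`: `a₀ = ⌊x⌋` and `aₙ₊₁ = ⌊1 / Tⁿ({x})⌋` where `T` is the Gauss map. -/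
noncomputable def cfA (x : ℝ) : ℕ → ℤ
  | 0 => ⌊x⌋
  | n + 1 => ⌊1 / gaussMap^[n] (Int.fract x)⌋

/-- Numerators of the convergents: `p₀ = a₀`, `p₁ = a₁a₀ + 1`, `pₙ = aₙpₙ₋₁ + pₙ₋₂`. -/
noncomputable def convP (x : ℝ) : ℕ → ℤ
  | 0 => ⌊x⌋
  | 1 => cfA x 1 * ⌊x⌋ + 1
  | n + 2 => cfA x (n + 2) * convP x (n + 1) + convP x n

/-- Denominators of the convergents: `q₀ = 1`, `q₁ = a₁`, `qₙ = aₙqₙ₋₁ + qₙ₋₂`. -/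
noncomputable def convQ (x : ℝ) : ℕ → ℤ
  | 0 => 1
  | 1 => cfA x 1
  | n + 2 => cfA x (n + 2) * convQ x (n + 1) + convQ x n

/-- iterated Gauss map orbit of the fractional part -/
noncomputable def cfT (x : ℝ) (n : ℕ) : ℝ := gaussMap^[n] (Int.fract x)

/-- extended numerators: `pe 0 = p₋₁ = 1`, `pe (n+1) = pₙ` -/
noncomputable def pe (x : ℝ) : ℕ → ℤ
  | 0 => 1
  | 1 => ⌊x⌋
  | n + 2 => cfA x (n + 1) * pe x (n + 1) + pe x n

/-- extended denominators: `qe 0 = q₋₁ = 0`, `qe (n+1) = qₙ` -/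
noncomputable def qe (x : ℝ) : ℕ → ℤ
  | 0 => 0
  | 1 => 1
  | n + 2 => cfA x (n + 1) * qe x (n + 1) + qe x n

lemma convP_eq_pe (x : ℝ) : ∀ n, convP x n = pe x (n + 1)
  | 0 => rfl
  | 1 => by simp [convP, pe]
  | n + 2 => by
    rw [convP, convP_eq_pe x (n + 1), convP_eq_pe x n]
    simp [pe]

lemma convQ_eq_qe (x : ℝ) : ∀ n, convQ x n = qe x (n + 1)
  | 0 => rfl
  | 1 => by simp [convQ, qe]
  | n + 2 => by
    rw [convQ, convQ_eq_qe x (n + 1), convQ_eq_qe x n]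
    simp [qe]

lemma cfT_props (x : ℝ) (hx : Irrational x) :
    ∀ n, Irrational (cfT x n) ∧ 0 < cfT x n ∧ cfT x n < 1 := by
  intro n
  induction n with
  | zero =>
    have h1 : Irrational (Int.fract x) := by
      simpa [← Int.self_sub_floor] using hx.sub_intCast ⌊x⌋
    exact ⟨h1, Int.fract_pos.mpr (hx.ne_int ⌊x⌋), Int.fract_lt_one x⟩
  | succ n ih =>
    obtain ⟨hirr, hpos, hlt⟩ := ih
    have hne : cfT x n ≠ 0 := ne_of_gt hpos
    have hstep : cfT x (n + 1) = Int.fract (1 / cfT x n) := by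
      have h2 : cfT x (n + 1) = gaussMap (cfT x n) := Function.iterate_succ_apply' _ _ _
      rw [h2]
      simp only [gaussMap, if_neg hne]
    have hinv : Irrational (1 / cfT x n) := by
      simpa [one_div] using hirr.inv
    have h1 : Irrational (Int.fract (1 / cfT x n)) := by
      simpa [← Int.self_sub_floor] using hinv.sub_intCast ⌊1 / cfT x n⌋
    rw [hstep]
    exact ⟨h1, Int.fract_pos.mpr (hinv.ne_int _), Int.fract_lt_one _⟩

lemma cfA_eq (x : ℝ) (n : ℕ) : cfA x (n + 1) = ⌊1 / cfT x n⌋ := rfl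

lemma cfT_succ (x : ℝ) (hx : Irrational x) (n : ℕ) :
    cfT x (n + 1) = 1 / cfT x n - cfA x (n + 1) := by
  have hpos := (cfT_props x hx n).2.1
  have h2 : cfT x (n + 1) = gaussMap (cfT x n) := Function.iterate_succ_apply' _ _ _
  rw [h2]
  simp only [gaussMap, if_neg (ne_of_gt hpos)]
  rw [cfA_eq, Int.fract]

lemma one_le_cfA (x : ℝ) (hx : Irrational x) (n : ℕ) : 1 ≤ cfA x (n + 1) := by
  obtain ⟨_, hpos, hlt⟩ := cfT_props x hx n
  rw [cfA_eq]
  rw [Int.le_floor]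
  push_cast
  rw [le_div_iff₀ hpos]
  linarith

/-- the fundamental error identity -/
lemma err_succ (x : ℝ) (hx : Irrational x) :
    ∀ n, (qe x (n + 1) : ℝ) * x - pe x (n + 1) =
      -(cfT x n) * ((qe x n : ℝ) * x - pe x n) := by
  intro n
  induction n with
  | zero =>
    simp only [qe, pe, cfT, Function.iterate_zero, id, ← Int.self_sub_floor]
    push_cast
    ring
  | succ n ih =>
    have hpos := (cfT_props x hx n).2.1
    have hne : cfT x n ≠ 0 := ne_of_gt hpos
    have hstep := cfT_succ x hx n
    have hrecP : (pe x (n + 2) : ℝ) = cfA x (n + 1) * pe x (n + 1) + pe x n := by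
      push_cast [pe]; ring
    have hrecQ : (qe x (n + 2) : ℝ) = cfA x (n + 1) * qe x (n + 1) + qe x n := by
      push_cast [qe]; ring
    have key : (qe x n : ℝ) * x - pe x n = -(1 / cfT x n) * ((qe x (n+1) : ℝ) * x - pe x (n+1)) := by
      rw [ih]; field_simp
    rw [hrecP, hrecQ, hstep]
    rw [show ((cfA x (n+1) : ℝ) * qe x (n+1) + qe x n) * x -
        ((cfA x (n+1) : ℝ) * pe x (n+1) + pe x n) =
        (cfA x (n+1) : ℝ) * ((qe x (n+1) : ℝ) * x - pe x (n+1)) +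
        ((qe x n : ℝ) * x - pe x n) by ring, key]
    field_simp
    ring

lemma qe_pos (x : ℝ) (hx : Irrational x) : ∀ n, 0 ≤ qe x n ∧ 1 ≤ qe x (n + 1) := by
  intro n
  induction n with
  | zero => exact ⟨le_refl 0, le_refl 1⟩
  | succ n ih =>
    obtain ⟨h0, h1⟩ := ih
    refine ⟨by linarith, ?_⟩
    have ha := one_le_cfA x hx n
    show 1 ≤ cfA x (n + 1) * qe x (n + 1) + qe x n
    nlinarith

lemma qe_grow (x : ℝ) (hx : Irrational x) : ∀ n : ℕ, (n : ℤ) ≤ qe x (n + 1) := by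
  have key : ∀ n : ℕ, (n : ℤ) + 1 ≤ qe x (n + 2) := by
    intro n
    induction n with
    | zero => simpa using (qe_pos x hx 1).2
    | succ n ih =>
      have h1 := (qe_pos x hx n).2
      have ha := one_le_cfA x hx (n + 1)
      have hnn := (qe_pos x hx (n + 1)).2
      show ((n : ℤ) + 1) + 1 ≤ cfA x (n + 2) * qe x (n + 2) + qe x (n + 1)
      nlinarith
  intro n
  cases n with
  | zero => simp [qe]
  | succ n => have := key n; push_cast at this ⊢; linarith

lemma det_eq (x : ℝ) : ∀ n, pe x (n + 1) * qe x n - pe x n * qe x (n + 1) = (-1 : ℤ) ^ (n + 1) := by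
  intro n
  induction n with
  | zero => simp [pe, qe]
  | succ n ih =>
    show pe x (n + 2) * qe x (n + 1) - pe x (n + 1) * qe x (n + 2) = (-1 : ℤ) ^ (n + 2)
    rw [show pe x (n + 2) = cfA x (n + 1) * pe x (n + 1) + pe x n from rfl,
      show qe x (n + 2) = cfA x (n + 1) * qe x (n + 1) + qe x n from rfl,
      pow_succ (-1 : ℤ) (n + 1)]
    linear_combination (-1 : ℤ) * ih


set_option maxHeartbeats 1000000 in
/-- Legendre's theorem: if `x` is irrational, `gcd(p,q) = 1`, `q > 0`, and
`|x - p/q| < 1/(2q²)`, then `p/q` is a convergent of the continued fraction of `x`. -/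
theorem legendre_best_approximation (x : ℝ) (hx : Irrational x) (p : ℤ) (q : ℕ)
    (hq : 0 < q) (hcop : Nat.gcd p.natAbs q = 1)
    (happrox : |x - (p : ℝ) / (q : ℝ)| < 1 / (2 * (q : ℝ) ^ 2)) :
    ∃ n : ℕ, (p : ℝ) / (q : ℝ) = (convP x n : ℝ) / (convQ x n : ℝ) := by
  classical
  obtain ⟨E, hEdef⟩ : ∃ E : ℕ → ℝ, E = fun n => (qe x n : ℝ) * x - pe x n := ⟨_, rfl⟩
  have hEsucc : ∀ n, E (n + 1) = -(cfT x n) * E n := by rw [hEdef]; exact err_succ x hx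
  have hEne : ∀ n, E n ≠ 0 := by
    intro n
    induction n with
    | zero => simp [hEdef, qe, pe]
    | succ n ih =>
      rw [hEsucc]
      exact mul_ne_zero (neg_ne_zero.mpr (ne_of_gt (cfT_props x hx n).2.1)) ih
  -- find the index m with qe x (m+1) ≤ q < qe x (m+2)
  have hex : ∃ n, (q : ℤ) < qe x (n + 1) := by
    refine ⟨q + 1, ?_⟩
    have := qe_grow x hx (q + 1)
    push_cast at this
    linarith
  set N := Nat.find hex with hNdef
  have hN : (q : ℤ) < qe x (N + 1) := Nat.find_spec hex
  have hNpos : N ≠ 0 := by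
    intro h
    rw [h] at hN
    simp only [qe] at hN
    omega
  obtain ⟨m, hm⟩ : ∃ m, N = m + 1 := ⟨N - 1, by omega⟩
  have hm1 : qe x (m + 1) ≤ (q : ℤ) := by
    have := Nat.find_min hex (show m < N by omega)
    push_neg at this
    exact this
  have hm2 : (q : ℤ) < qe x (m + 2) := by rw [hm] at hN; exact hN
  set M := m + 1 with hMdef
  obtain ⟨D, hDdef⟩ : ∃ D : ℤ, D = pe x (M + 1) * qe x M - pe x M * qe x (M + 1) := ⟨_, rfl⟩
  have hD2 : D * D = 1 := by
    rw [hDdef, det_eq x M, ← pow_add]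
    exact Even.neg_one_pow ⟨M + 1, by ring⟩
  obtain ⟨μ, hμdef⟩ : ∃ μ : ℤ, μ = D * ((q : ℤ) * pe x (M + 1) - p * qe x (M + 1)) := ⟨_, rfl⟩
  obtain ⟨ν, hνdef⟩ : ∃ ν : ℤ, ν = D * (p * qe x M - (q : ℤ) * pe x M) := ⟨_, rfl⟩
  have h1 : μ * pe x M + ν * pe x (M + 1) = p := by
    rw [hμdef, hνdef]
    linear_combination p * hD2 - p * D * hDdef
  have h2 : μ * qe x M + ν * qe x (M + 1) = (q : ℤ) := by
    rw [hμdef, hνdef]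
    linear_combination (q : ℤ) * hD2 - (q : ℤ) * D * hDdef
  have hM1 : 1 ≤ qe x M := (qe_pos x hx m).2
  have hM2 : 1 ≤ qe x (M + 1) := (qe_pos x hx (m + 1)).2
  have hqZ : 1 ≤ (q : ℤ) := by exact_mod_cast hq
  by_cases hν : ν = 0
  · -- p/q is the convergent p_m / q_m
    have hμ0 : μ ≠ 0 := by
      intro h
      rw [h, hν] at h2
      simp at h2
      omega
    refine ⟨m, ?_⟩
    rw [convP_eq_pe, convQ_eq_qe]
    have hp : (p : ℝ) = (μ : ℝ) * pe x M := by
      have : μ * pe x M = p := by rw [← h1, hν]; ring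
      exact_mod_cast this.symm
    have hqr : ((q : ℕ) : ℝ) = (μ : ℝ) * qe x M := by
      have : μ * qe x M = (q : ℤ) := by rw [← h2, hν]; ring
      exact_mod_cast this.symm
    rw [hp, hqr]
    exact mul_div_mul_left _ _ (by exact_mod_cast hμ0)
  · exfalso
    by_cases hμ : μ = 0
    · rw [hμ] at h2
      simp only [zero_mul, zero_add] at h2
      have : ν ≤ -1 ∨ 1 ≤ ν := by omega
      rcases this with h | h
      · nlinarith
      · nlinarith
    · -- μ and ν have opposite signs
      have hμν : μ * ν < 0 := by
        rcases lt_or_gt_of_ne hμ with hμ' | hμ' <;> rcases lt_or_gt_of_ne hν with hν' | hν'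
        · exfalso
          have ha : μ ≤ -1 := by omega
          have hb : ν ≤ -1 := by omega
          nlinarith
        · exact mul_neg_of_neg_of_pos hμ' hν'
        · exact mul_neg_of_pos_of_neg hμ' hν'
        · exfalso
          have ha : 1 ≤ μ := by omega
          have hb : 1 ≤ ν := by omega
          nlinarith
      have hEopp : E (M + 1) * E M < 0 := by
        rw [hEsucc M]
        have ht := (cfT_props x hx M).2.1
        have h0 : 0 < E M * E M := mul_self_pos.mpr (hEne M)
        nlinarith
      -- |E M| ≤ |q x - p|
      have h1r : (μ : ℝ) * pe x M + ν * pe x (M + 1) = p := by exact_mod_cast h1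
      have h2r : (μ : ℝ) * qe x M + ν * qe x (M + 1) = (q : ℝ) := by exact_mod_cast h2
      have hcomb : (q : ℝ) * x - p = μ * E M + ν * E (M + 1) := by
        simp only [hEdef]
        linear_combination h1r - x * h2r
      have hprod : 0 < ((μ : ℝ) * E M) * ((ν : ℝ) * E (M + 1)) := by
        have hμνR : ((μ : ℤ) * ν : ℝ) < 0 := by exact_mod_cast hμν
        push_cast at hμνR
        nlinarith
      have hμ2 : (1 : ℝ) ≤ (μ : ℝ) * μ := by
        have h := Int.one_le_abs hμ
        have : (1 : ℤ) ≤ μ * μ := by nlinarith [abs_nonneg μ, abs_mul_abs_self μ]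
        exact_mod_cast this
      have habs : |E M| ≤ |(q : ℝ) * x - p| := by
        rw [← sq_le_sq, hcomb]
        nlinarith [hprod, mul_self_nonneg ((ν : ℝ) * E (M + 1)),
          mul_nonneg (sub_nonneg.mpr hμ2) (mul_self_nonneg (E M))]
      -- turn into distance inequalities
      have hQpos : (0 : ℝ) < q := by exact_mod_cast hq
      have hGpos : (0 : ℝ) < (qe x M : ℝ) := by exact_mod_cast lt_of_lt_of_le one_pos hM1
      have hGleQ : (qe x M : ℝ) ≤ (q : ℝ) := by exact_mod_cast hm1
      have hqx : |(q : ℝ) * x - p| = (q : ℝ) * |x - p / q| := by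
        have hh : (q : ℝ) * x - p = (q : ℝ) * (x - p / q) := by field_simp; try ring
        rw [hh, abs_mul, abs_of_pos hQpos]
      have hEMlt : |E M| < 1 / (2 * (q : ℝ)) := by
        calc |E M| ≤ |(q : ℝ) * x - p| := habs
          _ = (q : ℝ) * |x - p / q| := hqx
          _ < (q : ℝ) * (1 / (2 * (q : ℝ) ^ 2)) := by
              exact mul_lt_mul_of_pos_left happrox hQpos
          _ = 1 / (2 * (q : ℝ)) := by field_simp
      have hconv : |x - (pe x M : ℝ) / (qe x M : ℝ)| = |E M| / (qe x M : ℝ) := by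
        have hh : x - (pe x M : ℝ) / (qe x M : ℝ) = E M / (qe x M : ℝ) := by
          rw [hEdef]
          field_simp
          try ring
        rw [hh, abs_div, abs_of_pos hGpos]
      have hne2 : p * qe x M - (q : ℤ) * pe x M ≠ 0 := by
        intro h
        apply hν
        rw [hνdef, h, mul_zero]
      have h1le : (1 : ℝ) ≤ |(p : ℝ) * qe x M - (q : ℝ) * pe x M| := by
        have := Int.one_le_abs hne2
        exact_mod_cast this
      have htri : |(p : ℝ) / q - (pe x M : ℝ) / (qe x M : ℝ)| ≤
          |x - (p : ℝ) / q| + |x - (pe x M : ℝ) / (qe x M : ℝ)| := by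
        calc |(p : ℝ) / q - (pe x M : ℝ) / (qe x M : ℝ)|
            ≤ |(p : ℝ) / q - x| + |x - (pe x M : ℝ) / (qe x M : ℝ)| := abs_sub_le _ _ _
          _ = |x - (p : ℝ) / q| + |x - (pe x M : ℝ) / (qe x M : ℝ)| := by
              rw [abs_sub_comm]
      have hdist : |(p : ℝ) / q - (pe x M : ℝ) / (qe x M : ℝ)| =
          |(p : ℝ) * qe x M - (q : ℝ) * pe x M| / ((q : ℝ) * (qe x M : ℝ)) := by
        have hh : (p : ℝ) / q - (pe x M : ℝ) / (qe x M : ℝ) =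
            ((p : ℝ) * qe x M - (q : ℝ) * pe x M) / ((q : ℝ) * (qe x M : ℝ)) := by
          field_simp
          try ring
        rw [hh, abs_div, abs_of_pos (show (0:ℝ) < (q : ℝ) * (qe x M : ℝ) by positivity)]
      -- final contradiction
      have hlow : 1 / ((q : ℝ) * (qe x M : ℝ)) ≤
          |(p : ℝ) / q - (pe x M : ℝ) / (qe x M : ℝ)| := by
        rw [hdist]
        gcongr
      have hup : |x - (pe x M : ℝ) / (qe x M : ℝ)| < 1 / (2 * (q : ℝ) * (qe x M : ℝ)) := by
        rw [hconv]
        calc |E M| / (qe x M : ℝ) < (1 / (2 * (q : ℝ))) / (qe x M : ℝ) := by gcongr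
          _ = 1 / (2 * (q : ℝ) * (qe x M : ℝ)) := by field_simp
      have hfin : 1 / ((q : ℝ) * (qe x M : ℝ)) <
          1 / (2 * (q : ℝ) ^ 2) + 1 / (2 * (q : ℝ) * (qe x M : ℝ)) :=
        lt_of_le_of_lt (hlow.trans htri) (add_lt_add happrox hup)
      have hsplit : 1 / ((q : ℝ) * (qe x M : ℝ)) =
          1 / (2 * (q : ℝ) * (qe x M : ℝ)) + 1 / (2 * (q : ℝ) * (qe x M : ℝ)) := by
        field_simp
        ring
      have hstep : 1 / (2 * (q : ℝ) * (qe x M : ℝ)) < 1 / (2 * (q : ℝ) ^ 2) := by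
        linarith
      have hlt := lt_of_one_div_lt_one_div (by positivity : (0:ℝ) < 2 * (q : ℝ) * (qe x M : ℝ)) hstep
      nlinarith
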